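/- arXiv:1201.3911 — 5 statements merged into one kernel-verified Lean document; each statement's English description precedes it below -/
import Mathlib

section
/- Let Ω be a compact ℝ^d-system with bounded complexity: for every ε > 0 there is N(ε) such that every (ρ_L, ε)-separated subset of Ω has cardinality at most N(ε), uniformly in L > 0. Then the translation action on Ω is equicontinuous: for every ε > 0 there exists δ > 0 such that whenever T, T' ∈ Ω satisfy ρ(T, T') < δ, one has ρ(T − x, T' − x) < ε for all x ∈ ℝ^d. -/
open Set

/-- The metric `ρ_L(T₁,T₂) = sup_{x ∈ [0,L]^d} ρ(T₁ − x, T₂ − x)` on an ℝ^d-system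
(`act T x` stands for `T − x`). -/
noncomputable def rhoL {d : ℕ} {Ω : Type*} [MetricSpace Ω]
    (act : Ω → EuclideanSpace ℝ (Fin d) → Ω) (L : ℝ) (T₁ T₂ : Ω) : ℝ :=
  sSup ((fun x => dist (act T₁ x) (act T₂ x)) ''
    {x : EuclideanSpace ℝ (Fin d) | ∀ i, x i ∈ Set.Icc (0 : ℝ) L})

/-- `X` is `(ρ_L, ε)`-separated: distinct elements of `X` are at `ρ_L`-distance ≥ ε. -/
def IsSeparatedSet {d : ℕ} {Ω : Type*} [MetricSpace Ω]
    (act : Ω → EuclideanSpace ℝ (Fin d) → Ω) (ε L : ℝ) (X : Set Ω) : Prop :=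
  ∀ T₁ ∈ X, ∀ T₂ ∈ X, T₁ ≠ T₂ → ε ≤ rhoL act L T₁ T₂

lemma euclid_abs_coord_le_norm {d : ℕ} (x : EuclideanSpace ℝ (Fin d)) (i : Fin d) :
    |x i| ≤ ‖x‖ := by
  rw [EuclideanSpace.norm_eq, ← Real.sqrt_sq_eq_abs]
  apply Real.sqrt_le_sqrt
  calc (x i)^2 = ‖x i‖^2 := by rw [Real.norm_eq_abs, sq_abs]
    _ ≤ ∑ j, ‖x j‖^2 := Finset.single_le_sum (f := fun j => ‖x j‖^2) (fun j _ => by positivity) (Finset.mem_univ i)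

/-- Any finite set that is pairwise η-separated somewhere in ℝ^d has bounded cardinality. -/
lemma sep_finset_card_le {d : ℕ} {Ω : Type*} [MetricSpace Ω] [CompactSpace Ω]
    (act : Ω → EuclideanSpace ℝ (Fin d) → Ω)
    (hzero : ∀ T : Ω, act T 0 = T)
    (hadd : ∀ (T : Ω) (x y : EuclideanSpace ℝ (Fin d)), act (act T x) y = act T (x + y))
    (hbdd : ∀ ε : ℝ, 0 < ε → ∃ N : ℕ, ∀ L : ℝ, 0 < L →
        ∀ X : Set Ω, IsSeparatedSet act ε L X → X.encard ≤ N)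
    {η : ℝ} (hη : 0 < η) :
    ∃ N : ℕ, ∀ F : Finset Ω,
      (∀ T₁ ∈ F, ∀ T₂ ∈ F, T₁ ≠ T₂ → ∃ x, η ≤ dist (act T₁ x) (act T₂ x)) → F.card ≤ N := by
  classical
  obtain ⟨N, hN⟩ := hbdd η hη
  refine ⟨N, fun F hF => ?_⟩
  choose! w hwspec using hF
  obtain ⟨M, hM0, hMb⟩ : ∃ M : ℝ, 0 ≤ M ∧ ∀ T₁ ∈ F, ∀ T₂ ∈ F, ‖w T₁ T₂‖ ≤ M := by
    refine ⟨∑ p ∈ F ×ˢ F, ‖w p.1 p.2‖, Finset.sum_nonneg (fun p _ => norm_nonneg _), ?_⟩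
    intro T₁ h₁ T₂ h₂
    have hmem : (T₁, T₂) ∈ F ×ˢ F := Finset.mem_product.2 ⟨h₁, h₂⟩
    have h := Finset.single_le_sum (s := F ×ˢ F) (f := fun p : Ω × Ω => ‖w p.1 p.2‖)
      (fun p _ => norm_nonneg _) hmem
    exact h
  set c : EuclideanSpace ℝ (Fin d) := WithLp.toLp 2 (fun _ => -M) with hc
  set L : ℝ := 2*M + 1 with hLdef
  have hL : 0 < L := by rw [hLdef]; linarith
  obtain ⟨C, hC⟩ := Metric.isBounded_iff.1 (isCompact_univ (X := Ω)).isBounded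
  have hCb : ∀ a b : Ω, dist a b ≤ C := fun a b => hC (mem_univ a) (mem_univ b)
  have hinj : Function.Injective (fun T : Ω => act T c) := by
    intro T₁ T₂ h
    have h2 := congrArg (fun T => act T (-c)) h
    simpa only [hadd, add_neg_cancel, hzero] using h2
  have hsep : IsSeparatedSet act η L ↑(F.image (fun T => act T c)) := by
    intro U hU V hV hne
    simp only [Finset.coe_image, Set.mem_image, Finset.mem_coe] at hU hV
    obtain ⟨T₁, h₁, rfl⟩ := hU
    obtain ⟨T₂, h₂, rfl⟩ := hV
    have hT : T₁ ≠ T₂ := fun h => hne (by rw [h])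
    set y : EuclideanSpace ℝ (Fin d) := w T₁ T₂ - c with hy
    have hycube : ∀ i, y i ∈ Set.Icc (0:ℝ) L := by
      intro i
      have h1 : |w T₁ T₂ i| ≤ M :=
        le_trans (euclid_abs_coord_le_norm _ i) (hMb T₁ h₁ T₂ h₂)
      have habs := abs_le.1 h1
      have hyi : y i = w T₁ T₂ i + M := by
        simp only [hy, PiLp.sub_apply, hc]
        ring
      constructor
      · rw [hyi]; linarith [habs.1]
      · rw [hyi, hLdef]; linarith [habs.2]
    have hkey : η ≤ dist (act (act T₁ c) y) (act (act T₂ c) y) := by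
      rw [hadd, hadd]
      have hcy : c + y = w T₁ T₂ := by rw [hy]; abel
      rw [hcy]
      exact hwspec T₁ h₁ T₂ h₂ hT
    refine le_trans hkey (le_csSup ⟨C, ?_⟩ ⟨y, hycube, rfl⟩)
    rintro r ⟨x, -, rfl⟩
    exact hCb _ _
  have h1 := hN L hL _ hsep
  rw [Set.encard_coe_eq_coe_finsetCard, Finset.card_image_of_injective _ hinj] at h1
  exact_mod_cast h1

/-- Total boundedness of `Ω` in the sup-metric `D(T,T') = sup_x dist (T−x) (T'−x)`. -/
lemma totally_bounded_sup {d : ℕ} {Ω : Type*} [MetricSpace Ω] [CompactSpace Ω]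
    (act : Ω → EuclideanSpace ℝ (Fin d) → Ω)
    (hzero : ∀ T : Ω, act T 0 = T)
    (hadd : ∀ (T : Ω) (x y : EuclideanSpace ℝ (Fin d)), act (act T x) y = act T (x + y))
    (hbdd : ∀ ε : ℝ, 0 < ε → ∃ N : ℕ, ∀ L : ℝ, 0 < L →
        ∀ X : Set Ω, IsSeparatedSet act ε L X → X.encard ≤ N)
    {η : ℝ} (hη : 0 < η) :
    ∃ F : Finset Ω, ∀ T : Ω, ∃ S ∈ F, ∀ x, dist (act T x) (act S x) ≤ η := by
  classical
  by_contra hcon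
  push_neg at hcon
  -- hcon : ∀ F, ∃ T, ∀ S ∈ F, ∃ x, η < dist (act T x) (act S x)
  obtain ⟨N, hN⟩ := sep_finset_card_le act hzero hadd hbdd hη
  choose pick hpick using hcon
  set G : ℕ → Finset Ω := fun n => Nat.rec ∅ (fun _ Fn => insert (pick Fn) Fn) n with hG
  have key : ∀ n, (G n).card = n ∧
      (∀ T₁ ∈ G n, ∀ T₂ ∈ G n, T₁ ≠ T₂ → ∃ x, η ≤ dist (act T₁ x) (act T₂ x)) := by
    intro n
    induction n with
    | zero => exact ⟨rfl, by intro T₁ h₁; exact absurd h₁ (Finset.notMem_empty T₁)⟩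
    | succ n ih =>
      have hGs : G (n+1) = insert (pick (G n)) (G n) := rfl
      have hnot : pick (G n) ∉ G n := by
        intro hmem
        obtain ⟨x, hx⟩ := hpick (G n) _ hmem
        rw [dist_self] at hx
        linarith
      constructor
      · rw [hGs, Finset.card_insert_of_notMem hnot, ih.1]
      · intro T₁ h₁ T₂ h₂ hne
        rw [hGs] at h₁ h₂
        rcases Finset.mem_insert.1 h₁ with rfl | h₁'
        · rcases Finset.mem_insert.1 h₂ with rfl | h₂'
          · exact absurd rfl hne
          · obtain ⟨x, hx⟩ := hpick (G n) T₂ h₂'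
            exact ⟨x, hx.le⟩
        · rcases Finset.mem_insert.1 h₂ with rfl | h₂'
          · obtain ⟨x, hx⟩ := hpick (G n) T₁ h₁'
            exact ⟨x, by rw [dist_comm]; exact hx.le⟩
          · exact ih.2 T₁ h₁' T₂ h₂' hne
  have h1 := hN (G (N+1)) (key (N+1)).2
  rw [(key (N+1)).1] at h1
  omega

/-- A compact ℝ^d-system with bounded complexity (every `(ρ_L, ε)`-separated set has
cardinality at most `N(ε)`, uniformly in `L`) has equicontinuous translational
dynamics. -/
theorem equicontinuous_of_bounded_complexity
    {d : ℕ} (hd : 1 ≤ d) {Ω : Type*} [MetricSpace Ω] [CompactSpace Ω]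
    (act : Ω → EuclideanSpace ℝ (Fin d) → Ω)
    (hzero : ∀ T : Ω, act T 0 = T)
    (hadd : ∀ (T : Ω) (x y : EuclideanSpace ℝ (Fin d)), act (act T x) y = act T (x + y))
    (hcont : Continuous fun p : Ω × EuclideanSpace ℝ (Fin d) => act p.1 p.2)
    (hbdd : ∀ ε : ℝ, 0 < ε → ∃ N : ℕ, ∀ L : ℝ, 0 < L →
        ∀ X : Set Ω, IsSeparatedSet act ε L X → X.encard ≤ N) :
    ∀ ε : ℝ, 0 < ε → ∃ δ : ℝ, 0 < δ ∧ ∀ T T' : Ω, dist T T' < δ →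
      ∀ x : EuclideanSpace ℝ (Fin d), dist (act T x) (act T' x) < ε := by
  classical
  intro ε hε
  by_contra hcon
  push_neg at hcon
  have hseq : ∀ n : ℕ, ∃ T T' : Ω, dist T T' < 1/(n+1) ∧
      ∃ x, ε ≤ dist (act T x) (act T' x) := by
    intro n
    obtain ⟨T, T', h1, x, h2⟩ := hcon (1/(n+1)) (by positivity)
    exact ⟨T, T', h1, x, h2⟩
  choose T T' hTT' X hX using hseq
  have hη : 0 < ε/5 := by positivity
  obtain ⟨F, hF⟩ := totally_bounded_sup act hzero hadd hbdd hη
  choose S hSF hS using fun n => hF (T n)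
  choose S' hSF' hS' using fun n => hF (T' n)
  -- pigeonhole on centers
  set f : ℕ → (↥F × ↥F) := fun n => (⟨S n, hSF n⟩, ⟨S' n, hSF' n⟩) with hf
  obtain ⟨p, hp⟩ := Finite.exists_infinite_fiber f
  have hA : (f ⁻¹' {p}).Infinite := Set.infinite_coe_iff.1 hp
  set e := hA.natEmbedding with he
  set u : ℕ → ℕ := fun k => (e k : ℕ) with hu
  have hu_inj : Function.Injective u := fun a b h => e.injective (Subtype.ext h)
  have huA : ∀ k, f (u k) = p := fun k => (e k).2
  have hSu : ∀ k, S (u k) = (p.1 : Ω) := by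
    intro k
    have := congrArg (fun q => (q.1 : Ω)) (huA k)
    simpa [hf] using this
  have hS'u : ∀ k, S' (u k) = (p.2 : Ω) := by
    intro k
    have := congrArg (fun q => (q.2 : Ω)) (huA k)
    simpa [hf] using this
  -- convergent subsequence
  obtain ⟨T₀, -, φ, hφ, hconv⟩ :=
    isCompact_univ.tendsto_subseq (x := fun k => T (u k)) (fun k => mem_univ _)
  set v : ℕ → ℕ := fun k => u (φ k) with hv
  have hconv1 : Filter.Tendsto (fun k => T (v k)) Filter.atTop (nhds T₀) := hconv
  have hv_inj : Function.Injective v := hu_inj.comp hφ.injective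
  have hv_top : Filter.Tendsto v Filter.atTop Filter.atTop := by
    have h := hv_inj.tendsto_cofinite
    rwa [Nat.cofinite_eq_atTop] at h
  have hdist0 : Filter.Tendsto (fun k => dist (T (v k)) (T' (v k)))
      Filter.atTop (nhds 0) := by
    apply squeeze_zero (fun k => dist_nonneg) (fun k => (hTT' (v k)).le)
    exact tendsto_one_div_add_atTop_nhds_zero_nat.comp hv_top
  have hconv2 : Filter.Tendsto (fun k => T' (v k)) Filter.atTop (nhds T₀) :=
    hconv1.congr_dist hdist0
  -- the fixed index
  set m : ℕ := v 0 with hm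
  have hcont1 : ∀ x : EuclideanSpace ℝ (Fin d), Continuous (fun W : Ω => act W x) :=
    fun x => hcont.comp (continuous_id.prodMk continuous_const)
  have hm1 : ∀ x, dist (act (T m) x) (act T₀ x) ≤ 2*(ε/5) := by
    intro x
    have hcv : Filter.Tendsto (fun k => act (T (v k)) x) Filter.atTop (nhds (act T₀ x)) :=
      ((hcont1 x).tendsto T₀).comp hconv1
    have hdd : Filter.Tendsto (fun k => dist (act (T m) x) (act (T (v k)) x))
        Filter.atTop (nhds (dist (act (T m) x) (act T₀ x))) :=
      tendsto_const_nhds.dist hcv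
    apply le_of_tendsto hdd
    filter_upwards with k
    calc dist (act (T m) x) (act (T (v k)) x)
        ≤ dist (act (T m) x) (act (p.1 : Ω) x) + dist (act (p.1 : Ω) x) (act (T (v k)) x) :=
          dist_triangle _ _ _
      _ ≤ ε/5 + ε/5 := by
          have h1 : dist (act (T m) x) (act (p.1:Ω) x) ≤ ε/5 := by
            have := hS m x; rwa [show S m = (p.1:Ω) from hSu (φ 0)] at this
          have h2 : dist (act (p.1:Ω) x) (act (T (v k)) x) ≤ ε/5 := by
            rw [dist_comm]
            have := hS (v k) x; rwa [show S (v k) = (p.1:Ω) from hSu (φ k)] at this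
          linarith
      _ = 2*(ε/5) := by ring
  have hm2 : ∀ x, dist (act (T' m) x) (act T₀ x) ≤ 2*(ε/5) := by
    intro x
    have hcv : Filter.Tendsto (fun k => act (T' (v k)) x) Filter.atTop (nhds (act T₀ x)) :=
      ((hcont1 x).tendsto T₀).comp hconv2
    have hdd : Filter.Tendsto (fun k => dist (act (T' m) x) (act (T' (v k)) x))
        Filter.atTop (nhds (dist (act (T' m) x) (act T₀ x))) :=
      tendsto_const_nhds.dist hcv
    apply le_of_tendsto hdd
    filter_upwards with k
    calc dist (act (T' m) x) (act (T' (v k)) x)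
        ≤ dist (act (T' m) x) (act (p.2 : Ω) x) + dist (act (p.2 : Ω) x) (act (T' (v k)) x) :=
          dist_triangle _ _ _
      _ ≤ ε/5 + ε/5 := by
          have h1 : dist (act (T' m) x) (act (p.2:Ω) x) ≤ ε/5 := by
            have := hS' m x; rwa [show S' m = (p.2:Ω) from hS'u (φ 0)] at this
          have h2 : dist (act (p.2:Ω) x) (act (T' (v k)) x) ≤ ε/5 := by
            rw [dist_comm]
            have := hS' (v k) x; rwa [show S' (v k) = (p.2:Ω) from hS'u (φ k)] at this
          linarith
      _ = 2*(ε/5) := by ring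
  have hfinal := hX m
  have htri : dist (act (T m) (X m)) (act (T' m) (X m)) ≤
      dist (act (T m) (X m)) (act T₀ (X m)) + dist (act (T' m) (X m)) (act T₀ (X m)) :=
    dist_triangle_right _ _ _
  have h1 := hm1 (X m)
  have h2 := hm2 (X m)
  linarith
end

section
/- Let c = (3 log 3 − 2 log 2)^{-1} and define f : [1, 3] → ℝ by f(x) = c/x² for 1 ≤ x ≤ 2 and f(x) = 3c/x² for 2 < x ≤ 3. Then f is a fixed point of the operator 𝒯 at all interior points: (4/3) f(2x) = f(x) for all x ∈ (1, 3/2); (4/9) f(2x/3) = f(x) for all x ∈ (3/2, 2); and (4/9) f(2x/3) + (2/3) f(x) = f(x) for all x ∈ (2, 3). Moreover f satisfies the volume normalization ∫₁³ x f(x) dx = 1. -/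
open Real MeasureTheory intervalIntegral

/-- The function `f(x) = c/x²` on `[1,2]` and `3c/x²` on `(2,3]`, with
`c = (3 log 3 − 2 log 2)⁻¹`, is a fixed point (at all interior points) of the
renormalized transition-consistency operator `𝒯` of the variable-tile-length fusion
tiling of ℝ, and satisfies the volume normalization `∫₁³ x f(x) dx = 1`. -/
theorem fixed_point_of_transition_operator :
    ∀ c : ℝ, c = (3 * Real.log 3 - 2 * Real.log 2)⁻¹ →
    ∀ f : ℝ → ℝ, (∀ x : ℝ, f x = if x ≤ 2 then c / x ^ 2 else 3 * c / x ^ 2) →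
      (∀ x ∈ Set.Ioo (1 : ℝ) (3 / 2), (4 / 3) * f (2 * x) = f x) ∧
      (∀ x ∈ Set.Ioo (3 / 2 : ℝ) 2, (4 / 9) * f (2 * x / 3) = f x) ∧
      (∀ x ∈ Set.Ioo (2 : ℝ) 3, (4 / 9) * f (2 * x / 3) + (2 / 3) * f x = f x) ∧
      (∫ x in (1 : ℝ)..3, x * f x) = 1 := by
  intro c hc f hf
  refine ⟨?_, ?_, ?_, ?_⟩
  · intro x ⟨h1, h2⟩
    rw [hf, hf, if_neg (by linarith), if_pos (by linarith)]
    have : x ≠ 0 := by linarith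
    field_simp; ring
  · intro x ⟨h1, h2⟩
    rw [hf, hf, if_pos (by linarith), if_pos (by linarith)]
    have : x ≠ 0 := by linarith
    field_simp; ring
  · intro x ⟨h1, h2⟩
    rw [hf, hf, if_pos (by linarith), if_neg (by linarith)]
    have : x ≠ 0 := by linarith
    field_simp; ring
  · have hint1 : IntervalIntegrable (fun x : ℝ => c * x⁻¹) volume 1 2 := by
      apply IntervalIntegrable.const_mul
      apply intervalIntegrable_inv
      · intro x hx
        rw [Set.uIcc_of_le (by norm_num)] at hx
        intro h; rw [h] at hx; linarith [hx.1]
      · fun_prop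
    have hint2 : IntervalIntegrable (fun x : ℝ => 3 * c * x⁻¹) volume 2 3 := by
      apply IntervalIntegrable.const_mul
      apply intervalIntegrable_inv
      · intro x hx
        rw [Set.uIcc_of_le (by norm_num)] at hx
        intro h; rw [h] at hx; linarith [hx.1]
      · fun_prop
    have e1 : ∀ x ∈ Set.Ioc (1:ℝ) 2, x * f x = c * x⁻¹ := by
      intro x hx
      rw [hf, if_pos hx.2]
      have : x ≠ 0 := by have := hx.1; intro h; rw [h] at this; linarith
      field_simp
    have e2 : ∀ x ∈ Set.Ioc (2:ℝ) 3, x * f x = 3 * c * x⁻¹ := by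
      intro x hx
      rw [hf, if_neg (not_le.2 hx.1)]
      have : x ≠ 0 := by have := hx.1; intro h; rw [h] at this; linarith
      field_simp
    have h12 : (∫ x in (1:ℝ)..2, x * f x) = ∫ x in (1:ℝ)..2, c * x⁻¹ := by
      rw [intervalIntegral.integral_of_le (by norm_num),
          intervalIntegral.integral_of_le (by norm_num)]
      exact MeasureTheory.setIntegral_congr_fun measurableSet_Ioc e1
    have h23 : (∫ x in (2:ℝ)..3, x * f x) = ∫ x in (2:ℝ)..3, 3 * c * x⁻¹ := by
      rw [intervalIntegral.integral_of_le (by norm_num),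
          intervalIntegral.integral_of_le (by norm_num)]
      exact MeasureTheory.setIntegral_congr_fun measurableSet_Ioc e2
    have hsplit : (∫ x in (1:ℝ)..3, x * f x) =
        (∫ x in (1:ℝ)..2, x * f x) + ∫ x in (2:ℝ)..3, x * f x := by
      refine (intervalIntegral.integral_add_adjacent_intervals ?_ ?_).symm
      · refine (intervalIntegrable_iff_integrableOn_Ioc_of_le (by norm_num)).2 ?_
        refine MeasureTheory.IntegrableOn.congr_fun
          ((intervalIntegrable_iff_integrableOn_Ioc_of_le (by norm_num)).1 hint1)
          (fun x hx => (e1 x hx).symm) measurableSet_Ioc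
      · refine (intervalIntegrable_iff_integrableOn_Ioc_of_le (by norm_num)).2 ?_
        refine MeasureTheory.IntegrableOn.congr_fun
          ((intervalIntegrable_iff_integrableOn_Ioc_of_le (by norm_num)).1 hint2)
          (fun x hx => (e2 x hx).symm) measurableSet_Ioc
    have hi1 : (∫ x in (1:ℝ)..2, x⁻¹) = Real.log (2/1) :=
      integral_inv (by rw [Set.uIcc_of_le (by norm_num)]; intro h; simp at h; linarith)
    have hi2 : (∫ x in (2:ℝ)..3, x⁻¹) = Real.log (3/2) :=
      integral_inv (by rw [Set.uIcc_of_le (by norm_num)]; intro h; simp at h; linarith)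
    rw [hsplit, h12, h23, intervalIntegral.integral_const_mul,
        intervalIntegral.integral_const_mul, hi1, hi2, hc]
    have h1 : Real.log (2/1) = Real.log 2 := by norm_num
    have h2 : Real.log (3/2) = Real.log 3 - Real.log 2 :=
      Real.log_div (by norm_num) (by norm_num)
    rw [h1, h2]
    have hne : 3 * Real.log 3 - 2 * Real.log 2 ≠ 0 := by
      have := Real.log_pos (by norm_num : (1:ℝ) < 2)
      have h3 : Real.log 2 < Real.log 3 := Real.log_lt_log (by norm_num) (by norm_num)
      nlinarith
    field_simp
    ring
end

section
/- Let γ ∈ ℂ satisfy 3^γ = 2^γ + 1 (complex powers of positive real bases, a^γ = exp(γ log a)), set λ = (3/2)^{γ−1}, and define f on (1, 3) with values in ℂ by f(x) = x^{−(γ+1)} for 1 < x < 2 and f(x) = 3^γ · x^{−(γ+1)} for 2 < x < 3. Then f is an eigenfunction of the operator 𝒯 with eigenvalue λ: (4/3) f(2x) = λ f(x) for all x ∈ (1, 3/2); (4/9) f(2x/3) = λ f(x) for all x ∈ (3/2, 2); and (4/9) f(2x/3) + (2/3) f(x) = λ f(x) for all x ∈ (2, 3). -/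
/-- If `γ ∈ ℂ` satisfies `3^γ = 2^γ + 1` (complex powers of positive real bases), and
`λ = (3/2)^(γ−1)`, then `f(x) = x^{−(γ+1)}` on `(1,2)` and `f(x) = 3^γ x^{−(γ+1)}` on
`(2,3)` is an eigenfunction of the transition-consistency operator `𝒯` with
eigenvalue `λ`. -/
theorem eigenfunction_of_transition_operator
    (γ : ℂ) (hγ : (3 : ℂ) ^ γ = (2 : ℂ) ^ γ + 1)
    (lam : ℂ) (hlam : lam = ((3 / 2 : ℂ)) ^ (γ - 1))
    (f : ℝ → ℂ)
    (hf : ∀ x : ℝ, f x = if x < 2 then (x : ℂ) ^ (-(γ + 1))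
      else (3 : ℂ) ^ γ * (x : ℂ) ^ (-(γ + 1))) :
    (∀ x ∈ Set.Ioo (1 : ℝ) (3 / 2), (4 / 3 : ℂ) * f (2 * x) = lam * f x) ∧
    (∀ x ∈ Set.Ioo (3 / 2 : ℝ) 2, (4 / 9 : ℂ) * f (2 * x / 3) = lam * f x) ∧
    (∀ x ∈ Set.Ioo (2 : ℝ) 3,
      (4 / 9 : ℂ) * f (2 * x / 3) + (2 / 3 : ℂ) * f x = lam * f x) := by
  have h2 : (2 : ℂ) ≠ 0 := by norm_num
  have h32 : (3 / 2 : ℂ) ≠ 0 := by norm_num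
  have h23 : (2 / 3 : ℂ) ≠ 0 := by norm_num
  have hA : (2 : ℂ) ^ γ ≠ 0 := by
    simp [Complex.cpow_eq_zero_iff]
  have hB : (2 : ℂ) ^ γ + 1 ≠ 0 := by
    rw [← hγ]; simp [Complex.cpow_eq_zero_iff]
  -- (3/2)^γ * 2^γ = 3^γ
  have key3 : (3 : ℂ) ^ γ = (3 / 2 : ℂ) ^ γ * (2 : ℂ) ^ γ := by
    have := Complex.mul_cpow_ofReal_nonneg (by norm_num : (0:ℝ) ≤ 3/2)
      (by norm_num : (0:ℝ) ≤ 2) γ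
    norm_num at this
    rw [← this]
  have key2 : (2 : ℂ) ^ γ = (2 / 3 : ℂ) ^ γ * (3 : ℂ) ^ γ := by
    have := Complex.mul_cpow_ofReal_nonneg (by norm_num : (0:ℝ) ≤ 2/3)
      (by norm_num : (0:ℝ) ≤ 3) γ
    norm_num at this
    rw [← this]
  have hlam2 : lam = 2 * ((2:ℂ)^γ + 1) / (3 * (2:ℂ)^γ) := by
    rw [hlam, Complex.cpow_sub _ _ h32, Complex.cpow_one]
    rw [← hγ, key3]
    field_simp
  have h23pow : (2 / 3 : ℂ) ^ γ = (2:ℂ)^γ / ((2:ℂ)^γ + 1) := by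
    rw [hγ] at key2
    rw [eq_div_iff hB]
    linear_combination -key2
  refine ⟨?_, ?_, ?_⟩
  · rintro x ⟨hx1, hx2⟩
    have hxpos : (0:ℝ) ≤ x := by linarith
    have h2x : ¬ (2 * x < 2) := by push_neg; linarith
    have hxlt : x < 2 := by linarith
    rw [hf (2*x), hf x, if_neg h2x, if_pos hxlt]
    have hm : (2 * (x : ℂ)) ^ (-(γ+1)) = (2:ℂ) ^ (-(γ+1)) * (x:ℂ) ^ (-(γ+1)) := by
      have := Complex.mul_cpow_ofReal_nonneg (by norm_num : (0:ℝ) ≤ 2) hxpos (-(γ+1))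
      push_cast at this
      exact this
    push_cast
    rw [hm, hγ, hlam2, Complex.cpow_neg, Complex.cpow_add _ _ h2, Complex.cpow_one]
    field_simp
    ring
  · rintro x ⟨hx1, hx2⟩
    have hxpos : (0:ℝ) ≤ x := by linarith
    have h2x : 2 * x / 3 < 2 := by linarith
    have hxlt : x < 2 := hx2
    rw [hf (2*x/3), hf x, if_pos h2x, if_pos hxlt]
    have h' := Complex.mul_cpow_ofReal_nonneg (by norm_num : (0:ℝ) ≤ 2/3) hxpos (-(γ+1))
    rw [show (2*x/3 : ℝ) = 2/3*x by ring]
    push_cast at h' ⊢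
    rw [h', Complex.cpow_neg (2/3 : ℂ), Complex.cpow_add _ _ h23, Complex.cpow_one,
      h23pow, hlam2]
    field_simp
    ring
  · rintro x ⟨hx1, hx2⟩
    have hxpos : (0:ℝ) ≤ x := by linarith
    have h2x : 2 * x / 3 < 2 := by linarith
    have hxlt : ¬ (x < 2) := by push_neg; linarith
    rw [hf (2*x/3), hf x, if_pos h2x, if_neg hxlt]
    have h' := Complex.mul_cpow_ofReal_nonneg (by norm_num : (0:ℝ) ≤ 2/3) hxpos (-(γ+1))
    rw [show (2*x/3 : ℝ) = 2/3*x by ring]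
    push_cast at h' ⊢
    rw [h', Complex.cpow_neg (2/3 : ℂ), Complex.cpow_add _ _ h23, Complex.cpow_one,
      h23pow, hγ, hlam2]
    field_simp
    ring
end

section
/- If λ ∈ ℂ satisfies |λ| ≥ 1 and λ ≠ 1, then (log 2) · log|λ| + log(3/2) · log|3λ − 2| > 0. Consequently, the only complex number λ with |λ| ≥ 1 satisfying (log 2) · log|λ| + log(3/2) · log|3λ − 2| = 0 is λ = 1. -/
lemma spectral_main : ∀ lam : ℂ, 1 ≤ ‖lam‖ → lam ≠ 1 →
    0 < Real.log 2 * Real.log (‖lam‖) +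
        Real.log (3 / 2) * Real.log (‖3 * lam - 2‖) := by
  intro lam h1 hne
  have hl2 : (0:ℝ) < Real.log 2 := Real.log_pos (by norm_num)
  have hl32 : (0:ℝ) < Real.log (3/2) := Real.log_pos (by norm_num)
  set r := ‖lam‖ with hr
  set s := ‖3 * lam - 2‖ with hs
  have hs0 : 0 ≤ s := norm_nonneg _
  have hsub : 3 * r - 2 ≤ s := by
    have := norm_sub_norm_le (3 * lam) (2 : ℂ)
    simpa [hr, hs, norm_mul] using this
  rcases lt_or_eq_of_le h1 with hgt | heq
  · have h1' : (0:ℝ) < Real.log r := Real.log_pos hgt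
    have hs1 : (1:ℝ) < s := by nlinarith
    have h2' : (0:ℝ) < Real.log s := Real.log_pos hs1
    positivity
  · have hlogr : Real.log r = 0 := by rw [← heq]; simp
    have hnsq : Complex.normSq lam = 1 := by
      have := Complex.sq_norm lam
      rw [← hr, ← heq] at this
      linarith [this.symm]
    have hre : lam.re < 1 := by
      rcases lt_or_eq_of_le (Complex.re_le_norm lam) with h | h
      · rw [← hr, ← heq] at h; exact h
      · exfalso
        apply hne
        have hre1 : lam.re = 1 := by rw [h, ← hr, ← heq]
        have him : lam.im = 0 := by
          have := Complex.normSq_apply lam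
          rw [hnsq, hre1] at this
          nlinarith
        exact Complex.ext (by simp [hre1]) (by simp [him])
    have hsq : s^2 = 13 - 12 * lam.re := by
      have h1 : s^2 = Complex.normSq (3 * lam - 2) := Complex.sq_norm _
      rw [h1, Complex.normSq_apply]
      simp only [Complex.sub_re, Complex.sub_im, Complex.mul_re, Complex.mul_im,
        Complex.re_ofNat, Complex.im_ofNat]
      have := Complex.normSq_apply lam
      rw [hnsq] at this
      nlinarith [this]
    have hs1 : (1:ℝ) < s := by nlinarith
    have h2' : (0:ℝ) < Real.log s := Real.log_pos hs1
    rw [hlogr]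
    nlinarith

/-- If `λ ∈ ℂ` has `|λ| ≥ 1` and `λ ≠ 1`, then
`log 2 · log|λ| + log(3/2) · log|3λ − 2| > 0`; consequently the only `λ` with `|λ| ≥ 1`
for which this quantity vanishes is `λ = 1`. -/
theorem spectral_estimate_transition_operator :
    (∀ lam : ℂ, 1 ≤ ‖lam‖ → lam ≠ 1 →
      0 < Real.log 2 * Real.log (‖lam‖) +
          Real.log (3 / 2) * Real.log (‖3 * lam - 2‖)) ∧
    (∀ lam : ℂ, 1 ≤ ‖lam‖ →
      Real.log 2 * Real.log (‖lam‖) +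
          Real.log (3 / 2) * Real.log (‖3 * lam - 2‖) = 0 →
      lam = 1) := by
  refine ⟨spectral_main, ?_⟩
  intro lam h1 heq
  by_contra hne
  exact (ne_of_gt (spectral_main lam h1 hne)) heq
end

section
/- Let M be the 4×4 integer matrix with rows (1, 1, 1, 1), (3, 0, 3, 0), (3, 3, 0, 0), (9, 0, 0, 0), and let v be the vector ((1 + √13)/2, 3, 3, 3(√13 − 1)/2). Then every entry of v is strictly positive, M v = ((7 + √13)/2) · v, and every complex eigenvalue μ of M with μ ≠ (7 + √13)/2 satisfies |μ| < (7 + √13)/2; that is, (7 + √13)/2 is the Perron–Frobenius eigenvalue of M with Perron eigenvector v. -/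
/-- The transition matrix `M` of the direct-product-variation fusion rule has
Perron–Frobenius eigenvalue `(7 + √13)/2` with strictly positive Perron eigenvector
`v = ((1 + √13)/2, 3, 3, 3(√13 − 1)/2)`: every entry of `v` is positive, `M v = ((7 + √13)/2) v`,
and every other complex eigenvalue `μ` of `M` satisfies `|μ| < (7 + √13)/2`. -/
theorem perron_frobenius_of_shear_transition_matrix
    (M : Matrix (Fin 4) (Fin 4) ℝ)
    (hM : M = !![1, 1, 1, 1; 3, 0, 3, 0; 3, 3, 0, 0; 9, 0, 0, 0])
    (v : Fin 4 → ℝ)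
    (hv : v = ![(1 + Real.sqrt 13) / 2, 3, 3, 3 * (Real.sqrt 13 - 1) / 2]) :
    (∀ i : Fin 4, 0 < v i) ∧
    M.mulVec v = ((7 + Real.sqrt 13) / 2) • v ∧
    (∀ μ : ℂ, Module.End.HasEigenvalue
        (Matrix.toLin' (M.map (fun r : ℝ => (r : ℂ)))) μ →
      μ ≠ (((7 + Real.sqrt 13) / 2 : ℝ) : ℂ) →
      ‖μ‖ < (7 + Real.sqrt 13) / 2) := by
  have hs0 : (0:ℝ) ≤ Real.sqrt 13 := Real.sqrt_nonneg 13
  have hs : Real.sqrt 13 ^ 2 = 13 := Real.sq_sqrt (by norm_num)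
  have h3 : (3:ℝ) < Real.sqrt 13 := by nlinarith
  have h4 : Real.sqrt 13 < 4 := by nlinarith
  set s := Real.sqrt 13 with hsdef
  refine ⟨?_, ?_, ?_⟩
  · intro i
    fin_cases i <;> simp [hv] <;> nlinarith
  · subst hM hv
    funext i
    fin_cases i <;>
      simp [Matrix.mulVec, dotProduct, Fin.sum_univ_four] <;>
      nlinarith
  · intro μ hμ hne
    -- extract eigenvector
    obtain ⟨x, hx⟩ := hμ.exists_hasEigenvector
    have hx0 : x ≠ 0 := hx.right
    have hxe : (Matrix.toLin' (M.map (fun r : ℝ => (r : ℂ)))) x = μ • x :=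
      hx.apply_eq_smul
    set A : Matrix (Fin 4) (Fin 4) ℂ := M.map (fun r : ℝ => (r : ℂ)) with hA
    have hAval : A = !![(1:ℂ), 1, 1, 1; 3, 0, 3, 0; 3, 3, 0, 0; 9, 0, 0, 0] := by
      subst hM
      ext i j
      fin_cases i <;> fin_cases j <;> simp [hA, Matrix.vecHead, Matrix.vecTail]
    have hmv : A.mulVec x = μ • x := by
      rw [← hxe]; simp [Matrix.toLin'_apply]
    set B : Matrix (Fin 4) (Fin 4) ℂ := A - μ • 1 with hB
    have hBmv : B.mulVec x = 0 := by
      rw [hB, Matrix.sub_mulVec, hmv, Matrix.smul_mulVec, Matrix.one_mulVec,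
        sub_self]
    have hdet : B.det = 0 := by
      rw [← Matrix.exists_mulVec_eq_zero_iff]
      exact ⟨x, hx0, hBmv⟩
    have hBval : B = !![1 - μ, 1, 1, 1; 3, -μ, 3, 0; 3, 3, -μ, 0; 9, 0, 0, -μ] := by
      rw [hB, hAval]
      ext i j
      fin_cases i <;> fin_cases j <;>
        simp [Matrix.sub_apply, Matrix.smul_apply, Matrix.one_apply,
          Matrix.vecHead, Matrix.vecTail]
    rw [hBval] at hdet
    simp [Matrix.det_succ_row_zero, Fin.sum_univ_succ, Fin.succAbove, show ((2:Fin 3).castSucc : Fin 4) = 2 from rfl] at hdet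
    have hfact : (μ + 3) ^ 2 * (μ ^ 2 - 7 * μ + 9) = 0 := by
      linear_combination hdet
    have hsC : (s:ℂ)^2 = 13 := by exact_mod_cast hs
    rcases mul_eq_zero.mp hfact with h | h
    · have h3' : μ + 3 = 0 := by
        exact pow_eq_zero_iff (by norm_num) |>.mp h
      have : μ = -3 := by linear_combination h3'
      rw [this]
      simp only [norm_neg]
      rw [show ((3:ℂ)) = ((3:ℝ):ℂ) by norm_num, Complex.norm_real, Real.norm_eq_abs]
      rw [abs_of_nonneg (by norm_num : (0:ℝ) ≤ 3)]
      linarith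
    · have hsplit : (μ - (((7 + s)/2 : ℝ):ℂ)) * (μ - (((7 - s)/2 : ℝ):ℂ)) = 0 := by
        push_cast
        linear_combination h - hsC/4
      rcases mul_eq_zero.mp hsplit with h' | h'
      · exact absurd (by linear_combination h') hne
      · have : μ = (((7 - s)/2 : ℝ):ℂ) := by linear_combination h'
        rw [this, Complex.norm_real, Real.norm_eq_abs, abs_of_nonneg (by linarith)]
        linarith
end
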